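/- Fix δ ∈ (0,1], assume G is connected, set λ = (√2 ρ / n) log(4n²/δ), and let s = ‖p*‖₀. Then with probability at least 1 − δ, the one-bit TV denoiser satisfies ‖p̂ − p*‖₂² ≤ 4√2 ρ ‖Dp*‖₁ log(4n²/δ) + 4 s log(4/δ) / n. -/

import Mathlib

set_option maxHeartbeats 1600000


open MeasureTheory ProbabilityTheory Finset Matrix

noncomputable section
namespace OneBit

/-- `D` is the edge–vertex incidence matrix of the undirected graph `G`:
rows indexed by edges `e = (i,j)` with `i < j`, carrying `1` at `min(i,j)` and `-1` at `max(i,j)`. -/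
def IsIncidenceMatrix {n m : ℕ} (G : SimpleGraph (Fin n)) (D : Matrix (Fin m) (Fin n) ℝ) : Prop :=
  ∃ ends : Fin m → Fin n × Fin n,
    Function.Injective ends ∧
    (∀ e, (ends e).1 < (ends e).2 ∧ G.Adj (ends e).1 (ends e).2) ∧
    (∀ i j : Fin n, i < j → G.Adj i j → ∃ e, ends e = (i, j)) ∧
    (∀ e k, D e k = if k = (ends e).1 then 1 else if k = (ends e).2 then -1 else 0)

/-- `Dd` is the Moore–Penrose pseudoinverse of `D`. -/
def IsMoorePenrose {n m : ℕ} (D : Matrix (Fin m) (Fin n) ℝ) (Dd : Matrix (Fin n) (Fin m) ℝ) : Prop :=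
  D * Dd * D = D ∧ Dd * D * Dd = Dd ∧ (D * Dd)ᵀ = D * Dd ∧ (Dd * D)ᵀ = Dd * D

/-- Inverse scaling factor `ρ = max_j ‖s_j‖₂`, the columns `s_j` of `D†`. -/
def rho {n m : ℕ} (Dd : Matrix (Fin n) (Fin m) ℝ) : ℝ :=
  ⨆ j : Fin m, Real.sqrt (∑ i, (Dd i j) ^ 2)

/-- Euclidean norm on `ℝⁿ`. -/
def l2 {n : ℕ} (p : Fin n → ℝ) : ℝ := Real.sqrt (∑ i, (p i) ^ 2)

/-- `‖(Dp)_T‖₁`, the ℓ₁ norm of `Dp` restricted to the coordinates in `T`. -/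
def tvOn {n m : ℕ} (D : Matrix (Fin m) (Fin n) ℝ) (T : Finset (Fin m)) (p : Fin n → ℝ) : ℝ :=
  ∑ e ∈ T, |D.mulVec p e|

/-- Compatibility factor `κ_T = inf_{p ∈ [0,1]^n, (Dp)_T ≠ 0} √|T| ‖p‖₂ / ‖(Dp)_T‖₁`. -/
def compat {n m : ℕ} (D : Matrix (Fin m) (Fin n) ℝ) (T : Finset (Fin m)) : ℝ :=
  sInf {x : ℝ | ∃ p : Fin n → ℝ, (∀ i, p i ∈ Set.Icc (0:ℝ) 1) ∧ tvOn D T p ≠ 0 ∧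
    x = Real.sqrt T.card * l2 p / tvOn D T p}

/-- `‖p‖₀`, the number of nonzero coordinates. -/
def supp0 {n : ℕ} (p : Fin n → ℝ) : ℕ := Nat.card {i // p i ≠ 0}

/-- `Y` has independent coordinates, with `Y ω i ~ Bernoulli(p i)` taking values in `{0,1}`. -/
def IsBernoulliFamily {Ω : Type*} [MeasurableSpace Ω] {n : ℕ} (μ : Measure Ω)
    (Y : Ω → Fin n → ℝ) (p : Fin n → ℝ) : Prop :=
  (∀ i, Measurable fun ω => Y ω i) ∧
  (∀ ω i, Y ω i = 0 ∨ Y ω i = 1) ∧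
  (∀ i, μ {ω | Y ω i = 1} = ENNReal.ofReal (p i)) ∧
  iIndepFun (fun i ω => Y ω i) μ

/-- The one-bit TV denoiser: `phat ∈ [0,1]^n` minimizes
`(1/n) Σᵢ (yᵢ - pᵢ)² + λ ‖Dp‖₁` over `p ∈ ℝⁿ`. -/
def IsTVDenoiser {n m : ℕ} (D : Matrix (Fin m) (Fin n) ℝ) (lam : ℝ)
    (y phat : Fin n → ℝ) : Prop :=
  (∀ i, phat i ∈ Set.Icc (0:ℝ) 1) ∧
  ∀ q : Fin n → ℝ,
    (1 / (n:ℝ)) * ∑ i, (y i - phat i) ^ 2 + lam * ∑ e, |D.mulVec phat e| ≤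
    (1 / (n:ℝ)) * ∑ i, (y i - q i) ^ 2 + lam * ∑ e, |D.mulVec q e|


section Aux
open Real

lemma quarter_aux {a b : ℝ} (ha : 0 < a) (hb : 0 < b) : a*b/(a+b)^2 ≤ 1/4 := by
  rw [div_le_iff₀ (by positivity)]
  nlinarith [sq_nonneg (a-b)]

lemma bernoulli_mgf (p : ℝ) (hp0 : 0 ≤ p) (hp1 : p ≤ 1) (t : ℝ) :
    (1 - p) * exp (t * (0 - p)) + p * exp (t * (1 - p)) ≤ exp (t ^ 2 / 8) := by
  rcases eq_or_lt_of_le hp1 with h1 | h1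
  · subst h1; simp; positivity
  rcases eq_or_lt_of_le hp0 with h0 | h0
  · subst h0; simp; positivity
  -- 0 < p < 1
  have hpos : ∀ s : ℝ, (0:ℝ) < 1 - p + p * exp s := fun s => by nlinarith [exp_pos s]
  set h : ℝ → ℝ := fun s => 1 - p + p * exp s with hh
  have hd : ∀ s, HasDerivAt h (p * exp s) s := by
    intro s
    exact ((Real.hasDerivAt_exp s).const_mul p).const_add (1 - p)
  set g1 : ℝ → ℝ := fun s => s/4 + p - p * exp s / h s with hg1
  have hg1d : ∀ s, HasDerivAt g1 (1/4 - p * exp s * (1 - p) / (h s)^2) s := by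
    intro s
    have h1d : HasDerivAt (fun s => p * exp s / h s)
        ((p * exp s * h s - p * exp s * (p * exp s)) / (h s)^2) s :=
      ((Real.hasDerivAt_exp s).const_mul p).div (hd s) (hpos s).ne'
    have h2d : HasDerivAt g1 (1/4 - (p * exp s * h s - p * exp s * (p * exp s)) / (h s)^2) s := by
      have := (((hasDerivAt_id s).div_const 4).add_const p).sub h1d
      exact this
    convert h2d using 1
    have hnum : p * exp s * h s - p * exp s * (p * exp s) = p * exp s * (1-p) := by
      simp only [hh]; ring
    rw [hnum]
  have hg1nonneg : ∀ s, 0 ≤ 1/4 - p * exp s * (1 - p) / (h s)^2 := by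
    intro s
    have key := quarter_aux (a := p * exp s) (b := 1 - p) (by positivity) (by linarith)
    have hs : p * exp s + (1 - p) = h s := by simp only [hh]; ring
    rw [hs] at key; linarith
  have hg1zero : g1 0 = 0 := by
    simp only [hg1, hh]
    rw [exp_zero]; field_simp; ring
  -- g1 is monotone
  have hg1mono : Monotone g1 := by
    apply monotone_of_deriv_nonneg
    · exact fun s => (hg1d s).differentiableAt
    · intro s; rw [(hg1d s).deriv]; exact hg1nonneg s
  -- define g
  set g : ℝ → ℝ := fun s => s^2/8 + s*p - Real.log (h s) with hg
  have hgd : ∀ s, HasDerivAt g (g1 s) s := by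
    intro s
    have hlog : HasDerivAt (fun s => Real.log (h s)) (p * exp s / h s) s :=
      (hd s).log (hpos s).ne'
    have := (((hasDerivAt_pow 2 s).div_const 8).add ((hasDerivAt_id s).mul_const p)).sub hlog
    refine this.congr_deriv ?_
    rw [hg1]; norm_num; ring
  have hgzero : g 0 = 0 := by
    simp only [hg, hh]; rw [exp_zero]; simp
  have hgnonneg : ∀ s, 0 ≤ g s := by
    intro s
    rcases le_or_gt 0 s with hs | hs
    · have : MonotoneOn g (Set.Ici 0) := by
        apply monotoneOn_of_deriv_nonneg (convex_Ici 0)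
        · exact fun x _ => ((hgd x).differentiableAt.continuousAt).continuousWithinAt
        · exact fun x _ => (hgd x).differentiableAt.differentiableWithinAt
        · intro x hx
          rw [(hgd x).deriv]
          rcases hx with hx
          have : (0:ℝ) ≤ x := by
            simp only [Set.mem_Ioi, interior_Ici] at hx; exact hx.le
          calc (0:ℝ) = g1 0 := hg1zero.symm
          _ ≤ g1 x := hg1mono this
      have := this (Set.mem_Ici.2 le_rfl) (Set.mem_Ici.2 hs) hs
      rwa [hgzero] at this
    · have : AntitoneOn g (Set.Iic 0) := by
        apply antitoneOn_of_deriv_nonpos (convex_Iic 0)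
        · exact fun x _ => ((hgd x).differentiableAt.continuousAt).continuousWithinAt
        · exact fun x _ => (hgd x).differentiableAt.differentiableWithinAt
        · intro x hx
          rw [(hgd x).deriv]
          have hx0 : x ≤ (0:ℝ) := by
            simp only [interior_Iic, Set.mem_Iio] at hx; exact hx.le
          calc g1 x ≤ g1 0 := hg1mono hx0
          _ = 0 := hg1zero
      have := this (Set.mem_Iic.2 hs.le) (Set.mem_Iic.2 le_rfl) hs.le
      rwa [hgzero] at this
  -- conclude
  have key : Real.log (h t) ≤ t^2/8 + t*p := by have := hgnonneg t; simp only [hg] at this; linarith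
  have hconv : (1 - p) * exp (t * (0 - p)) + p * exp (t * (1 - p)) = exp (-(t*p)) * h t := by
    simp only [hh]
    rw [show t * (0 - p) = -(t*p) + 0 by ring, show t * (1-p) = -(t*p) + t by ring,
      exp_add, exp_add]
    rw [exp_zero]; ring
  rw [hconv]
  calc exp (-(t*p)) * h t = exp (-(t*p)) * exp (Real.log (h t)) := by rw [exp_log (hpos t)]
  _ = exp (-(t*p) + Real.log (h t)) := (exp_add _ _).symm
  _ ≤ exp (t^2/8) := by apply exp_le_exp.2; linarith

section ProbAux
variable {Ω : Type*} [MeasurableSpace Ω] {n : ℕ} {μ : Measure Ω} [IsProbabilityMeasure μ]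
  {Y : Ω → Fin n → ℝ} {p : Fin n → ℝ}

lemma bern_integral (hY : IsBernoulliFamily μ Y p) (hp : ∀ i, p i ∈ Set.Icc (0:ℝ) 1)
    (i : Fin n) (f : ℝ → ℝ) :
    ∫ ω, f (Y ω i) ∂μ = (1 - p i) * f 0 + p i * f 1 := by
  obtain ⟨hm, h01, hp1, -⟩ := hY
  have hs : MeasurableSet {ω | Y ω i = 1} := (hm i) (measurableSet_singleton 1)
  have hind : (fun ω => Y ω i) = Set.indicator {ω | Y ω i = 1} (fun _ => (1:ℝ)) := by
    funext ω
    rcases h01 ω i with h | h <;> simp [Set.indicator_apply, h]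
  have hYint : Integrable (fun ω => Y ω i) μ := by
    rw [hind]; exact (integrable_const 1).indicator hs
  have hfY : (fun ω => f (Y ω i)) = fun ω => f 0 + (f 1 - f 0) * Y ω i := by
    funext ω
    rcases h01 ω i with h | h <;> simp [h]
  rw [hfY, integral_add (integrable_const _) (hYint.const_mul _), integral_const,
    integral_const_mul]
  have hintY : ∫ ω, Y ω i ∂μ = p i := by
    rw [hind, integral_indicator_const _ hs, measureReal_def, hp1 i, smul_eq_mul, mul_one,
      ENNReal.toReal_ofReal (hp i).1]
  rw [hintY]
  simp [measure_univ]
  ring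

lemma bern_mgf_le (hY : IsBernoulliFamily μ Y p) (hp : ∀ i, p i ∈ Set.Icc (0:ℝ) 1)
    (i : Fin n) (w t : ℝ) :
    mgf (fun ω => w * (Y ω i - p i)) μ t ≤ exp (t ^ 2 * w ^ 2 / 8) := by
  have : mgf (fun ω => w * (Y ω i - p i)) μ t
      = ∫ ω, (fun x => exp (t * (w * (x - p i)))) (Y ω i) ∂μ := rfl
  rw [this, bern_integral hY hp i (fun x => exp (t * (w * (x - p i))))]
  have := bernoulli_mgf (p i) (hp i).1 (hp i).2 (t * w)
  calc (1 - p i) * exp (t * (w * (0 - p i))) + p i * exp (t * (w * (1 - p i)))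
      = (1 - p i) * exp ((t*w) * (0 - p i)) + p i * exp ((t*w) * (1 - p i)) := by ring_nf
  _ ≤ exp ((t*w)^2/8) := this
  _ = exp (t^2*w^2/8) := by ring_nf

lemma chernoff_one_side (hY : IsBernoulliFamily μ Y p) (hp : ∀ i, p i ∈ Set.Icc (0:ℝ) 1)
    (w : Fin n → ℝ) (V r : ℝ) (hV : 0 < V) (hw : ∑ i, w i ^ 2 ≤ V) (hr : 0 < r) :
    μ {ω | r ≤ ∑ i, w i * (Y ω i - p i)} ≤ ENNReal.ofReal (exp (-2 * r ^ 2 / V)) := by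
  obtain ⟨hm, h01, hmg, hindep⟩ := hY
  set t : ℝ := 4 * r / V with ht
  have ht0 : 0 < t := by positivity
  set X : Fin n → Ω → ℝ := fun i ω => w i * (Y ω i - p i) with hX
  set S : Ω → ℝ := fun ω => ∑ i, w i * (Y ω i - p i) with hS
  have hmX : ∀ i, Measurable (X i) := fun i => (((hm i).sub_const (p i)).const_mul (w i))
  have hmS : Measurable S := by
    apply Finset.measurable_sum
    exact fun i _ => hmX i
  have hindepX : iIndepFun X μ :=
    hindep.comp (fun i (x : ℝ) => w i * (x - p i))
      (fun i => (measurable_id.sub_const (p i)).const_mul (w i))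
  have hSeq : (∑ i, X i) = S := by
    funext ω; rw [Finset.sum_apply]
  have hSbd : ∀ ω, |S ω| ≤ ∑ i, |w i| := by
    intro ω
    refine (Finset.abs_sum_le_sum_abs _ _).trans ?_
    apply Finset.sum_le_sum
    intro i _
    rw [abs_mul]
    have h1 : |Y ω i - p i| ≤ 1 := by
      rcases h01 ω i with h | h <;> rw [h] <;> rw [abs_le] <;>
        constructor <;> linarith [(hp i).1, (hp i).2]
    nlinarith [abs_nonneg (w i)]
  have h_int : Integrable (fun ω => exp (t * S ω)) μ := by
    apply Integrable.mono' (integrable_const (exp (t * ∑ i, |w i|)))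
    · exact ((hmS.const_mul t).exp).aestronglyMeasurable
    · refine Filter.Eventually.of_forall fun ω => ?_
      rw [Real.norm_eq_abs, abs_of_pos (exp_pos _), exp_le_exp]
      have h2 : S ω ≤ ∑ i, |w i| := (le_abs_self _).trans (hSbd ω)
      nlinarith [ht0]
  have hcher := measure_ge_le_exp_mul_mgf (μ := μ) (X := S) r ht0.le h_int
  have hmgf : mgf S μ t ≤ exp (t ^ 2 * V / 8) := by
    rw [← hSeq, hindepX.mgf_sum hmX Finset.univ]
    calc ∏ i, mgf (X i) μ t ≤ ∏ i, exp (t ^ 2 * w i ^ 2 / 8) := by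
          apply Finset.prod_le_prod (fun i _ => mgf_nonneg)
          exact fun i _ => bern_mgf_le ⟨hm, h01, hmg, hindep⟩ hp i (w i) t
    _ = exp (∑ i, t ^ 2 * w i ^ 2 / 8) := by rw [Real.exp_sum]
    _ ≤ exp (t ^ 2 * V / 8) := by
          rw [exp_le_exp, ← Finset.sum_div, ← Finset.mul_sum]
          have : t^2 * (∑ i, w i ^ 2) ≤ t^2 * V := by nlinarith [sq_nonneg t]
          linarith
  have hbound : exp (-t * r) * mgf S μ t ≤ exp (-2 * r ^ 2 / V) := by
    calc exp (-t * r) * mgf S μ t ≤ exp (-t * r) * exp (t ^ 2 * V / 8) :=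
          mul_le_mul_of_nonneg_left hmgf (le_of_lt (exp_pos _))
    _ = exp (-t * r + t ^ 2 * V / 8) := (exp_add _ _).symm
    _ = exp (-2 * r ^ 2 / V) := by
          congr 1
          rw [ht]; field_simp; ring
  have hfin : μ {ω | r ≤ S ω} ≠ ⊤ := measure_ne_top _ _
  rw [ENNReal.le_ofReal_iff_toReal_le hfin (exp_pos _).le]
  exact hcher.trans hbound


lemma chernoff_abs (hY : IsBernoulliFamily μ Y p) (hp : ∀ i, p i ∈ Set.Icc (0:ℝ) 1)
    (w : Fin n → ℝ) (V r : ℝ) (hV : 0 < V) (hw : ∑ i, w i ^ 2 ≤ V) (hr : 0 < r) :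
    μ {ω | r < |∑ i, w i * (Y ω i - p i)|} ≤ ENNReal.ofReal (2 * exp (-2 * r ^ 2 / V)) := by
  have hneg : ∀ ω, ∑ i, (-w) i * (Y ω i - p i) = -∑ i, w i * (Y ω i - p i) := by
    intro ω; rw [← Finset.sum_neg_distrib]
    exact Finset.sum_congr rfl fun i _ => by simp [neg_mul]
  have hsub : {ω | r < |∑ i, w i * (Y ω i - p i)|} ⊆
      {ω | r ≤ ∑ i, w i * (Y ω i - p i)} ∪ {ω | r ≤ ∑ i, (-w) i * (Y ω i - p i)} := by
    intro ω hω
    simp only [Set.mem_setOf_eq] at hω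
    rcases lt_abs.mp hω with h | h
    · exact Or.inl h.le
    · refine Or.inr ?_
      show r ≤ ∑ i, (-w) i * (Y ω i - p i)
      rw [hneg ω]; exact h.le
  have h1 := chernoff_one_side hY hp w V r hV hw hr
  have h2 := chernoff_one_side hY hp (-w) V r hV (by simpa using hw) hr
  calc μ {ω | r < |∑ i, w i * (Y ω i - p i)|}
      ≤ μ ({ω | r ≤ ∑ i, w i * (Y ω i - p i)} ∪ {ω | r ≤ ∑ i, (-w) i * (Y ω i - p i)}) :=
        measure_mono hsub
  _ ≤ μ {ω | r ≤ ∑ i, w i * (Y ω i - p i)} + μ {ω | r ≤ ∑ i, (-w) i * (Y ω i - p i)} :=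
        measure_union_le _ _
  _ ≤ ENNReal.ofReal (exp (-2 * r ^ 2 / V)) + ENNReal.ofReal (exp (-2 * r ^ 2 / V)) :=
        add_le_add h1 h2
  _ = ENNReal.ofReal (2 * exp (-2 * r ^ 2 / V)) := by
        rw [← ENNReal.ofReal_add (exp_pos _).le (exp_pos _).le]; ring_nf

lemma null_coords (hY : IsBernoulliFamily μ Y p) :
    μ {ω | ¬ ∀ i, (p i = 0 ∨ p i = 1) → Y ω i = p i} = 0 := by
  obtain ⟨hm, h01, hp1, -⟩ := hY
  have hsub : {ω | ¬ ∀ i, (p i = 0 ∨ p i = 1) → Y ω i = p i} ⊆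
      ⋃ i, {ω | (p i = 0 ∨ p i = 1) ∧ Y ω i ≠ p i} := by
    intro ω hω
    simp only [Set.mem_setOf_eq, not_forall] at hω
    obtain ⟨i, hi⟩ := hω
    refine Set.mem_iUnion.2 ⟨i, ?_⟩
    simp only [Set.mem_setOf_eq]
    tauto
  refine measure_mono_null hsub (measure_iUnion_null fun i => ?_)
  rcases Classical.em (p i = 0 ∨ p i = 1) with h | h
  · rcases h with h | h
    · have : {ω | (p i = 0 ∨ p i = 1) ∧ Y ω i ≠ p i} ⊆ {ω | Y ω i = 1} := by
        intro ω ⟨_, hne⟩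
        rcases h01 ω i with h0 | h0
        · exact absurd (h0.trans h.symm) hne
        · exact h0
      refine measure_mono_null this ?_
      rw [hp1 i, h]; simp
    · have hms : MeasurableSet {ω | Y ω i = 1} := (hm i) (measurableSet_singleton 1)
      have : {ω | (p i = 0 ∨ p i = 1) ∧ Y ω i ≠ p i} ⊆ {ω | Y ω i = 1}ᶜ := by
        intro ω ⟨_, hne⟩
        simp only [Set.mem_compl_iff, Set.mem_setOf_eq]
        intro hy1
        exact hne (hy1.trans h.symm)
      refine measure_mono_null this ?_
      rw [measure_compl hms (measure_ne_top _ _), hp1 i, h]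
      simp
  · have : {ω | (p i = 0 ∨ p i = 1) ∧ Y ω i ≠ p i} = ∅ := by
      ext ω; simp only [Set.mem_setOf_eq, Set.mem_empty_iff_false, iff_false]
      rintro ⟨h', _⟩; exact h h'
    rw [this]; exact measure_empty


end ProbAux

section DetAux
variable {n m : ℕ} {G : SimpleGraph (Fin n)} {D : Matrix (Fin m) (Fin n) ℝ}
  {Dd : Matrix (Fin n) (Fin m) ℝ}

/-- kernel of incidence matrix of a connected graph is constants -/
lemma ker_const (hD : IsIncidenceMatrix G D) (hG : G.Connected)
    (v : Fin n → ℝ) (hv : D.mulVec v = 0) (i j : Fin n) : v i = v j := by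
  obtain ⟨ends, -, hor, hsur, hent⟩ := hD
  have hadj : ∀ a b : Fin n, G.Adj a b → v a = v b := by
    have key : ∀ a b : Fin n, a < b → G.Adj a b → v a = v b := by
      intro a b hab hGab
      obtain ⟨e, he⟩ := hsur a b hab hGab
      have hrow : D.mulVec v e = v a - v b := by
        have hterm : ∀ k, D e k * v k =
            (if k = a then v k else 0) - (if k = b then v k else 0) := by
          intro k
          rw [hent e k, he]
          by_cases hka : k = a
          · subst hka
            have : ¬ (k = b) := fun h => absurd (h ▸ hab) (lt_irrefl _)
            simp [this]
          · by_cases hkb : k = b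
            · subst hkb
              simp [hka, hab.ne']
            · simp [hka, hkb]
        unfold Matrix.mulVec dotProduct
        rw [Finset.sum_congr rfl fun k _ => hterm k, Finset.sum_sub_distrib,
          Finset.sum_ite_eq' Finset.univ a v, Finset.sum_ite_eq' Finset.univ b v]
        simp
      have : v a - v b = 0 := by rw [← hrow, hv]; rfl
      linarith
    intro a b hGab
    rcases lt_trichotomy a b with h | h | h
    · exact key a b h hGab
    · rw [h]
    · exact (key b a h hGab.symm).symm
  have hreach := (hG i j : G.Reachable i j)
  obtain ⟨w⟩ := hreach
  induction w with
  | nil => rfl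
  | cons h p ih => exact (hadj _ _ h).trans ih

lemma proj_props (hDd : IsMoorePenrose D Dd) (d : Fin n → ℝ) :
    ((Dd * D).mulVec d) ⬝ᵥ (d - (Dd * D).mulVec d) = 0 := by
  obtain ⟨h1, h2, h3, h4⟩ := hDd
  set P := Dd * D with hP
  have hPP : P * P = P := by
    rw [hP]
    calc Dd * D * (Dd * D) = Dd * D * Dd * D := by rw [Matrix.mul_assoc (Dd * D) Dd D]
    _ = Dd * D := by rw [h2]
  have hsym : Pᵀ = P := h4
  have key : (P.mulVec d) ⬝ᵥ (P.mulVec d) = (P.mulVec d) ⬝ᵥ d := by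
    calc (P.mulVec d) ⬝ᵥ (P.mulVec d) = (P.vecMul (P.mulVec d)) ⬝ᵥ d :=
          Matrix.dotProduct_mulVec _ _ _
    _ = (Pᵀ.mulVec (P.mulVec d)) ⬝ᵥ d := by rw [← Matrix.mulVec_transpose]
    _ = (P.mulVec (P.mulVec d)) ⬝ᵥ d := by rw [hsym]
    _ = ((P * P).mulVec d) ⬝ᵥ d := by rw [Matrix.mulVec_mulVec]
    _ = (P.mulVec d) ⬝ᵥ d := by rw [hPP]
  rw [dotProduct_sub, key]
  ring

lemma proj_norm_le (hDd : IsMoorePenrose D Dd) (d : Fin n → ℝ) :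
    ∑ i, (d i - (Dd * D).mulVec d i) ^ 2 ≤ ∑ i, d i ^ 2 := by
  set P := Dd * D with hP
  set v : Fin n → ℝ := fun i => d i - P.mulVec d i with hv
  have horth : (P.mulVec d) ⬝ᵥ (d - P.mulVec d) = 0 := proj_props hDd d
  have hexp : ∑ i, d i ^ 2 = ∑ i, v i ^ 2 + 2 * ((P.mulVec d) ⬝ᵥ (d - P.mulVec d))
      + ∑ i, (P.mulVec d i) ^ 2 := by
    unfold dotProduct
    rw [Finset.mul_sum, ← Finset.sum_add_distrib, ← Finset.sum_add_distrib]
    apply Finset.sum_congr rfl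
    intro i _
    simp only [hv, Pi.sub_apply]
    ring
  have hsq : 0 ≤ ∑ i, (P.mulVec d i) ^ 2 := Finset.sum_nonneg fun i _ => sq_nonneg _
  rw [hexp, horth]
  linarith


lemma deterministic (hD : IsIncidenceMatrix G D) (hG : G.Connected) (hDd : IsMoorePenrose D Dd)
    (hn : 0 < n) (lam rA rB : ℝ) (hlam : 0 ≤ lam) (hrA : 0 ≤ rA) (hrB : 0 ≤ rB)
    (h2rB : 2 * rB ≤ (n:ℝ) * lam)
    (pstar y phat : Fin n → ℝ)
    (hopt : IsTVDenoiser D lam y phat)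
    (hA : |∑ i, (y i - pstar i)| ≤ rA)
    (hB : ∀ j, |∑ i, Dd i j * (y i - pstar i)| ≤ rB) :
    ∑ i, (phat i - pstar i) ^ 2 ≤
      4 * rA ^ 2 / n + 4 * ((n:ℝ) * lam) * ∑ e, |D.mulVec pstar e| := by
  have hn' : (0:ℝ) < n := by exact_mod_cast hn
  set d : Fin n → ℝ := phat - pstar with hd
  have hdapp : ∀ i, d i = phat i - pstar i := fun i => rfl
  set ε : Fin n → ℝ := fun i => y i - pstar i with hε
  set T : ℝ := ∑ i, d i ^ 2 with hT
  set Nhat : ℝ := ∑ e, |D.mulVec phat e| with hNh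
  set Nstar : ℝ := ∑ e, |D.mulVec pstar e| with hNs
  have hNh0 : 0 ≤ Nhat := Finset.sum_nonneg fun e _ => abs_nonneg _
  have hNs0 : 0 ≤ Nstar := Finset.sum_nonneg fun e _ => abs_nonneg _
  -- basic inequality
  have hsum : ∑ i, (y i - phat i) ^ 2 =
      ∑ i, (y i - pstar i) ^ 2 + (T - 2 * ∑ i, ε i * d i) := by
    rw [hT, Finset.mul_sum, ← Finset.sum_sub_distrib, ← Finset.sum_add_distrib]
    apply Finset.sum_congr rfl
    intro i _
    rw [hdapp i]
    simp only [hε]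
    ring
  have hbasic : T ≤ 2 * ∑ i, ε i * d i + (n:ℝ) * lam * Nstar - (n:ℝ) * lam * Nhat := by
    have hopt' := hopt.2 pstar
    rw [hsum] at hopt'
    have h1 : (1 / (n:ℝ)) * (T - 2 * ∑ i, ε i * d i) ≤ lam * Nstar - lam * Nhat := by
      rw [hNs, hNh]; linarith [hopt']
    have h2 : T - 2 * ∑ i, ε i * d i ≤ (n:ℝ) * (lam * Nstar - lam * Nhat) := by
      have := mul_le_mul_of_nonneg_left h1 hn'.le
      rw [← mul_assoc, mul_one_div, div_self hn'.ne', one_mul] at this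
      exact this
    linarith [h2]
  -- projection decomposition
  set P : Matrix (Fin n) (Fin n) ℝ := Dd * D with hP
  set v : Fin n → ℝ := d - P.mulVec d with hv
  have hvker : D.mulVec v = 0 := by
    rw [hv, Matrix.mulVec_sub, Matrix.mulVec_mulVec, hP, ← Matrix.mul_assoc, hDd.1, sub_self]
  set i0 : Fin n := ⟨0, hn⟩ with hi0
  set c : ℝ := v i0 with hc
  have hconst : ∀ i, v i = c := fun i => ker_const hD hG v hvker i i0
  set u : Fin m → ℝ := D.mulVec d with hu
  set S : Fin m → ℝ := fun j => ∑ i, Dd i j * ε i with hS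
  have hd_eq : ∀ i, d i = c + Dd.mulVec u i := by
    intro i
    have h1 : v i = c := hconst i
    have h2 : v i = d i - P.mulVec d i := rfl
    have h3 : P.mulVec d i = Dd.mulVec u i := by
      rw [hu, Matrix.mulVec_mulVec]
    rw [h2, h3] at h1
    linarith
  have hsplit : ∑ i, ε i * d i = c * (∑ i, ε i) + ∑ j, u j * S j := by
    calc ∑ i, ε i * d i = ∑ i, (ε i * c + ε i * Dd.mulVec u i) := by
          apply Finset.sum_congr rfl
          intro i _
          rw [hd_eq i]; ring
    _ = c * (∑ i, ε i) + ∑ i, ε i * Dd.mulVec u i := by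
          rw [Finset.sum_add_distrib, Finset.mul_sum]
          congr 1
          apply Finset.sum_congr rfl
          intro i _; ring
    _ = c * (∑ i, ε i) + ∑ j, u j * S j := by
          congr 1
          have : ∀ i, ε i * Dd.mulVec u i = ∑ j, ε i * (Dd i j * u j) := by
            intro i
            unfold Matrix.mulVec dotProduct
            rw [Finset.mul_sum]
          rw [Finset.sum_congr rfl fun i _ => this i, Finset.sum_comm]
          apply Finset.sum_congr rfl
          intro j _
          rw [hS, Finset.mul_sum]
          apply Finset.sum_congr rfl
          intro i _; ring
  -- bound the S part
  have hSbound : ∑ j, u j * S j ≤ rB * (Nhat + Nstar) := by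
    calc ∑ j, u j * S j ≤ ∑ j, |u j| * rB := by
          apply Finset.sum_le_sum
          intro j _
          calc u j * S j ≤ |u j * S j| := le_abs_self _
          _ = |u j| * |S j| := abs_mul _ _
          _ ≤ |u j| * rB := mul_le_mul_of_nonneg_left (hB j) (abs_nonneg _)
    _ = rB * ∑ j, |u j| := by rw [← Finset.sum_mul]; ring
    _ ≤ rB * (Nhat + Nstar) := by
          apply mul_le_mul_of_nonneg_left _ hrB
          rw [hNh, hNs, ← Finset.sum_add_distrib]
          apply Finset.sum_le_sum
          intro j _
          have : u j = D.mulVec phat j - D.mulVec pstar j := by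
            rw [hu, hd, Matrix.mulVec_sub]; rfl
          rw [this]
          exact abs_sub _ _
  -- bound the constant part
  have hc2 : (n:ℝ) * c ^ 2 ≤ T := by
    have h1 := proj_norm_le hDd d
    have h2 : ∑ i, (d i - (Dd * D).mulVec d i) ^ 2 = (n:ℝ) * c ^ 2 := by
      have : ∀ i : Fin n, (d i - (Dd * D).mulVec d i) ^ 2 = c ^ 2 := by
        intro i
        have : d i - (Dd * D).mulVec d i = v i := rfl
        rw [this, hconst i]
      rw [Finset.sum_congr rfl fun i _ => this i, Finset.sum_const, Finset.card_univ,
        Fintype.card_fin, nsmul_eq_mul]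
    rw [h2] at h1
    exact h1
  have hcA : 2 * (c * ∑ i, ε i) ≤ T / 2 + 2 * rA ^ 2 / (n:ℝ) := by
    have h1 : c * ∑ i, ε i ≤ |c| * rA := by
      calc c * ∑ i, ε i ≤ |c * ∑ i, ε i| := le_abs_self _
      _ = |c| * |∑ i, ε i| := abs_mul _ _
      _ ≤ |c| * rA := mul_le_mul_of_nonneg_left hA (abs_nonneg _)
    have hq : 2 * rA ^ 2 / (n:ℝ) * (n:ℝ) = 2 * rA ^ 2 := by
      field_simp
    have h2 : 2 * (|c| * rA) ≤ (n:ℝ) * c ^ 2 / 2 + 2 * rA ^ 2 / (n:ℝ) := by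
      have h4 : 4 * (n:ℝ) * |c| * rA ≤ (n:ℝ)^2 * c^2 + 4 * rA^2 := by
        nlinarith [sq_nonneg ((n:ℝ) * |c| - 2 * rA), sq_abs c]
      have h5 : 2 * (|c| * rA) = 4 * (n:ℝ) * |c| * rA / (2 * (n:ℝ)) := by
        field_simp; ring
      have h6 : ((n:ℝ)^2 * c^2 + 4 * rA^2) / (2 * (n:ℝ)) = (n:ℝ) * c^2/2 + 2 * rA^2/(n:ℝ) := by
        field_simp; ring
      rw [h5, ← h6]
      exact (div_le_div_iff_of_pos_right (by positivity)).2 h4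
    linarith [h1, h2, hc2]
  -- combine
  have hfinal : T ≤ T / 2 + 2 * rA ^ 2 / (n:ℝ) + 2 * rB * (Nhat + Nstar)
      + (n:ℝ) * lam * Nstar - (n:ℝ) * lam * Nhat := by
    rw [hsplit] at hbasic
    linarith [hSbound, hcA]
  have h2rBN : 2 * rB * Nhat ≤ (n:ℝ) * lam * Nhat :=
    mul_le_mul_of_nonneg_right h2rB hNh0
  have h2rBN2 : 2 * rB * Nstar ≤ (n:ℝ) * lam * Nstar :=
    mul_le_mul_of_nonneg_right h2rB hNs0
  have : T / 2 ≤ 2 * rA ^ 2 / (n:ℝ) + 2 * ((n:ℝ) * lam) * Nstar := by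
    nlinarith [hfinal, h2rBN, h2rBN2]
  calc T ≤ 4 * rA ^ 2 / (n:ℝ) + 4 * ((n:ℝ) * lam) * Nstar := by
        rw [show (4:ℝ) * rA ^ 2 / (n:ℝ) = 2 * (2 * rA ^2 / (n:ℝ)) by ring]
        linarith [this]
  _ = 4 * rA ^ 2 / n + 4 * ((n:ℝ) * lam) * ∑ e, |D.mulVec pstar e| := rfl


end DetAux
end Aux

/-- Theorem 1 specialized to `T = ∅`: with probability at least `1 - δ`,
`‖p̂ - p*‖₂² ≤ 4√2 ρ ‖Dp*‖₁ log(4n²/δ) + 4 s log(4/δ) / n` where `s = ‖p*‖₀`. -/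
theorem one_bit_tv_denoising_risk_bound_empty
    {n m : ℕ} (G : SimpleGraph (Fin n)) (D : Matrix (Fin m) (Fin n) ℝ)
    (Dd : Matrix (Fin n) (Fin m) ℝ)
    (hD : IsIncidenceMatrix G D) (hG : G.Connected) (hDd : IsMoorePenrose D Dd)
    {Ω : Type*} [MeasurableSpace Ω] (μ : Measure Ω) [IsProbabilityMeasure μ]
    (pstar : Fin n → ℝ) (hpstar : ∀ i, pstar i ∈ Set.Icc (0:ℝ) 1)
    (Y : Ω → Fin n → ℝ) (hY : IsBernoulliFamily μ Y pstar)
    (δ : ℝ) (hδ : δ ∈ Set.Ioc (0:ℝ) 1)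
    (lam : ℝ) (hlam : lam = Real.sqrt 2 * rho Dd / n * Real.log (4 * (n:ℝ) ^ 2 / δ))
    (phat : Ω → Fin n → ℝ) (hphat : ∀ ω, IsTVDenoiser D lam (Y ω) (phat ω)) :
    ENNReal.ofReal (1 - δ) ≤
      μ {ω | ∑ i, (phat ω i - pstar i) ^ 2 ≤
        4 * Real.sqrt 2 * rho Dd * (∑ e, |D.mulVec pstar e|) * Real.log (4 * (n:ℝ) ^ 2 / δ)
        + 4 * (supp0 pstar) * Real.log (4 / δ) / n} := by
  classical
  obtain ⟨hδ0, hδ1⟩ := hδ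
  rcases Nat.eq_zero_or_pos n with hn0 | hn
  · -- degenerate case n = 0
    subst hn0
    haveI : IsEmpty (Fin m) := by
      constructor
      intro e
      obtain ⟨ends, -, -, -, -⟩ := hD
      exact (ends e).1.elim0
    have hset : {ω | ∑ i, (phat ω i - pstar i) ^ 2 ≤
        4 * Real.sqrt 2 * rho Dd * (∑ e, |D.mulVec pstar e|) * Real.log (4 * ((0:ℕ):ℝ) ^ 2 / δ)
        + 4 * (supp0 pstar) * Real.log (4 / δ) / ((0:ℕ):ℝ)} = Set.univ := by
      ext ω
      simp only [Set.mem_setOf_eq, Set.mem_univ, iff_true, Finset.univ_eq_empty,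
        Finset.sum_empty, Nat.cast_zero, div_zero, mul_zero, zero_mul, add_zero]
      norm_num
    rw [hset, measure_univ]
    exact ENNReal.ofReal_le_one.2 (by linarith)
  -- main case n ≥ 1
  have hn' : (0:ℝ) < n := by exact_mod_cast hn
  have hmY := hY.1
  set ρ : ℝ := rho Dd with hρdef
  have hρ0 : 0 ≤ ρ := Real.iSup_nonneg fun j => Real.sqrt_nonneg _
  set L : ℝ := Real.log (4 * (n:ℝ) ^ 2 / δ) with hLdef
  set Lδ : ℝ := Real.log (4 / δ) with hLδdef
  have hLδpos : 0 < Lδ := Real.log_pos (by rw [lt_div_iff₀ hδ0]; linarith)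
  have h4n2pos : (0:ℝ) < 4 * (n:ℝ) ^ 2 / δ := by positivity
  have h4n2 : (4:ℝ) ≤ 4 * (n:ℝ) ^ 2 / δ := by
    have h1 : (1:ℝ) ≤ (n:ℝ) := by exact_mod_cast hn
    have h2 : (4:ℝ) ≤ 4 * (n:ℝ) ^ 2 := by nlinarith
    exact h2.trans (le_div_self (by positivity) hδ0 hδ1)
  have hL1 : (1:ℝ) ≤ L := by
    have he : Real.exp 1 ≤ 4 := by
      have := Real.exp_one_lt_d9
      linarith
    calc (1:ℝ) = Real.log (Real.exp 1) := (Real.log_exp 1).symm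
    _ ≤ L := Real.log_le_log (Real.exp_pos 1) (he.trans h4n2)
  have hLpos : (0:ℝ) < L := lt_of_lt_of_le one_pos hL1
  have hnlam : (n:ℝ) * lam = Real.sqrt 2 * ρ * L := by
    rw [hlam]
    field_simp
  have hlam0 : 0 ≤ lam := by
    rw [hlam]
    have h0 : (0:ℝ) ≤ Real.sqrt 2 * ρ / n := by positivity
    exact mul_nonneg h0 (le_trans zero_le_one hL1)
  set χ : Fin n → ℝ := fun i => if pstar i = 0 ∨ pstar i = 1 then 0 else 1 with hχdef
  have hχ01 : ∀ i, χ i = 0 ∨ χ i = 1 := by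
    intro i
    by_cases h : pstar i = 0 ∨ pstar i = 1 <;> simp [hχdef, h]
  set WA : ℝ := ∑ i, χ i ^ 2 with hWAdef
  have hWA0 : 0 ≤ WA := Finset.sum_nonneg fun i _ => sq_nonneg _
  set rA : ℝ := Real.sqrt (WA * Lδ / 2) with hrAdef
  set rB : ℝ := ρ * Real.sqrt (L / 2) with hrBdef
  have hrA0 : 0 ≤ rA := Real.sqrt_nonneg _
  have hrB0 : 0 ≤ rB := mul_nonneg hρ0 (Real.sqrt_nonneg _)
  have hsqrt4 : Real.sqrt 4 = 2 := by
    rw [show (4:ℝ) = 2 ^ 2 by norm_num, Real.sqrt_sq (by norm_num : (0:ℝ) ≤ 2)]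
  have h2rB : 2 * rB ≤ (n:ℝ) * lam := by
    rw [hnlam, hrBdef]
    have h1 : 2 * Real.sqrt (L / 2) = Real.sqrt 2 * Real.sqrt L := by
      have e1 : Real.sqrt (4 * (L/2)) = Real.sqrt 4 * Real.sqrt (L/2) :=
        Real.sqrt_mul (by norm_num) _
      have e2 : Real.sqrt (2 * L) = Real.sqrt 2 * Real.sqrt L :=
        Real.sqrt_mul (by norm_num) _
      have e3 : (4:ℝ) * (L/2) = 2 * L := by ring
      rw [← e2, ← e3, e1, hsqrt4]
    have h2 : Real.sqrt L ≤ L := by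
      have : Real.sqrt L ≤ Real.sqrt (L ^ 2) := Real.sqrt_le_sqrt (by nlinarith)
      rwa [Real.sqrt_sq hLpos.le] at this
    calc 2 * (ρ * Real.sqrt (L / 2)) = ρ * (2 * Real.sqrt (L / 2)) := by ring
    _ = ρ * (Real.sqrt 2 * Real.sqrt L) := by rw [h1]
    _ ≤ ρ * (Real.sqrt 2 * L) := by
        apply mul_le_mul_of_nonneg_left _ hρ0
        exact mul_le_mul_of_nonneg_left h2 (Real.sqrt_nonneg 2)
    _ = Real.sqrt 2 * ρ * L := by ring
  -- events
  set SA : Ω → ℝ := fun ω => ∑ i, χ i * (Y ω i - pstar i) with hSAdef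
  set SB : Fin m → Ω → ℝ := fun j ω => ∑ i, (χ i * Dd i j) * (Y ω i - pstar i) with hSBdef
  set A : Set Ω := {ω | rA < |SA ω|} with hAdef
  set U : Set Ω := ⋃ j, {ω | rB < |SB j ω|} with hUdef
  set N : Set Ω := {ω | ¬ ∀ i, (pstar i = 0 ∨ pstar i = 1) → Y ω i = pstar i} with hNdef
  -- measure of A
  have hμA : μ A ≤ ENNReal.ofReal (δ / 2) := by
    rcases eq_or_lt_of_le hWA0 with hWAz | hWApos
    · have hall : ∀ i, χ i = 0 := by
        intro i
        have h1 := (Finset.sum_eq_zero_iff_of_nonneg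
          (fun i _ => sq_nonneg (χ i))).1 hWAz.symm i (Finset.mem_univ i)
        exact pow_eq_zero_iff two_ne_zero |>.1 h1
      have hAe : A = ∅ := by
        ext ω
        simp only [hAdef, Set.mem_setOf_eq, Set.mem_empty_iff_false, iff_false, not_lt]
        have hSA0 : SA ω = 0 := by
          rw [hSAdef]
          apply Finset.sum_eq_zero
          intro i _
          rw [hall i, zero_mul]
        rw [hSA0, abs_zero]
        exact hrA0
      rw [hAe, measure_empty]
      exact zero_le
    · have hrApos : 0 < rA := Real.sqrt_pos.2 (by positivity)
      have hch := chernoff_abs hY hpstar χ WA rA hWApos le_rfl hrApos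
      refine hch.trans (le_of_eq ?_)
      congr 1
      rw [hrAdef, Real.sq_sqrt (by positivity)]
      rw [show -2 * (WA * Lδ / 2) / WA = -Lδ by field_simp]
      rw [hLδdef, Real.exp_neg, Real.exp_log (by positivity)]
      field_simp
      ring
  -- measure of U
  have hmn : (m:ℝ) ≤ (n:ℝ) ^ 2 := by
    obtain ⟨ends, hinj, -, -, -⟩ := hD
    have := Fintype.card_le_of_injective ends hinj
    simp only [Fintype.card_fin, Fintype.card_prod] at this
    have : (m:ℝ) ≤ ((n * n : ℕ) : ℝ) := by exact_mod_cast this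
    push_cast at this
    nlinarith
  have hμU : μ U ≤ ENNReal.ofReal (δ / 2) := by
    rcases Nat.eq_zero_or_pos m with hm0 | hmpos
    · subst hm0
      haveI : IsEmpty (Fin 0) := by infer_instance
      rw [hUdef, Set.iUnion_of_empty]
      simp
    · have hne : Nonempty (Fin m) := ⟨⟨0, hmpos⟩⟩
      -- rho positive
      have hρpos : 0 < ρ := by
        rcases eq_or_lt_of_le hρ0 with hρz | h
        · exfalso
          have hcol : ∀ i k, Dd i k = 0 := by
            intro i k
            have h1 : Real.sqrt (∑ i', Dd i' k ^ 2) ≤ ρ := by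
              rw [hρdef]
              exact le_ciSup (f := fun j => Real.sqrt (∑ i, Dd i j ^ 2))
                (Set.Finite.bddAbove (Set.finite_range _)) k
            rw [← hρz] at h1
            have h2 : Real.sqrt (∑ i', Dd i' k ^ 2) = 0 :=
              le_antisymm h1 (Real.sqrt_nonneg _)
            have h3 : ∑ i', Dd i' k ^ 2 = 0 :=
              (Real.sqrt_eq_zero (Finset.sum_nonneg fun _ _ => sq_nonneg _)).1 h2
            have h4 := (Finset.sum_eq_zero_iff_of_nonneg
              (fun i' _ => sq_nonneg (Dd i' k))).1 h3 i (Finset.mem_univ i)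
            exact pow_eq_zero_iff two_ne_zero |>.1 h4
          have hDd0 : Dd = 0 := by
            ext i k
            exact hcol i k
          have hD0 : D = 0 := by
            have := hDd.1
            rw [hDd0, Matrix.mul_zero, Matrix.zero_mul] at this
            exact this.symm
          obtain ⟨ends, -, -, -, hent⟩ := hD
          obtain ⟨e⟩ := hne
          have h1 : D e (ends e).1 = 1 := by rw [hent]; simp
          rw [hD0] at h1
          simp at h1
        · exact h
      have hrBpos : 0 < rB := mul_pos hρpos (Real.sqrt_pos.2 (by positivity))
      have hBj : ∀ j, μ {ω | rB < |SB j ω|} ≤ ENNReal.ofReal (δ / (2 * (n:ℝ) ^ 2)) := by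
        intro j
        have hw : ∑ i, (χ i * Dd i j) ^ 2 ≤ ρ ^ 2 := by
          have h1 : ∑ i, (χ i * Dd i j) ^ 2 ≤ ∑ i, Dd i j ^ 2 := by
            apply Finset.sum_le_sum
            intro i _
            rcases hχ01 i with h | h <;> rw [h] <;> nlinarith [sq_nonneg (Dd i j)]
          have h2 : Real.sqrt (∑ i, Dd i j ^ 2) ≤ ρ := by
            rw [hρdef]
            exact le_ciSup (f := fun j => Real.sqrt (∑ i, Dd i j ^ 2))
              (Set.Finite.bddAbove (Set.finite_range _)) j
          have h3 : ∑ i, Dd i j ^ 2 ≤ ρ ^ 2 := by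
            have := Real.sq_sqrt (x := ∑ i, Dd i j ^ 2)
              (Finset.sum_nonneg fun i _ => sq_nonneg (Dd i j))
            nlinarith [Real.sqrt_nonneg (∑ i, Dd i j ^ 2)]
          linarith
        have hch := chernoff_abs hY hpstar (fun i => χ i * Dd i j) (ρ ^ 2) rB
          (by positivity) hw hrBpos
        refine hch.trans (le_of_eq ?_)
        congr 1
        rw [hrBdef, mul_pow, Real.sq_sqrt (by positivity : (0:ℝ) ≤ L / 2)]
        rw [show -2 * (ρ ^ 2 * (L / 2)) / ρ ^ 2 = -L by field_simp]
        rw [hLdef, Real.exp_neg, Real.exp_log h4n2pos]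
        rw [inv_div]
        field_simp
        ring
      calc μ U ≤ ∑ j, μ {ω | rB < |SB j ω|} := measure_iUnion_fintype_le μ _
      _ ≤ ∑ _j : Fin m, ENNReal.ofReal (δ / (2 * (n:ℝ) ^ 2)) :=
          Finset.sum_le_sum fun j _ => hBj j
      _ = (m : ENNReal) * ENNReal.ofReal (δ / (2 * (n:ℝ) ^ 2)) := by
          rw [Finset.sum_const, Finset.card_univ, Fintype.card_fin, nsmul_eq_mul]
      _ = ENNReal.ofReal ((m:ℝ) * (δ / (2 * (n:ℝ) ^ 2))) := by
          rw [ENNReal.ofReal_mul (by positivity : (0:ℝ) ≤ (m:ℝ)), ENNReal.ofReal_natCast]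
      _ ≤ ENNReal.ofReal (δ / 2) := by
          apply ENNReal.ofReal_le_ofReal
          have hstep : (m:ℝ) * (δ / (2 * (n:ℝ) ^ 2)) ≤ (n:ℝ)^2 * (δ / (2 * (n:ℝ) ^ 2)) :=
            mul_le_mul_of_nonneg_right hmn (by positivity)
          have heq : (n:ℝ)^2 * (δ / (2 * (n:ℝ) ^ 2)) = δ / 2 := by
            field_simp
          linarith
  -- measure of N
  have hμN : μ N = 0 := null_coords hY
  -- the good event implies the risk bound
  have hsub : (A ∪ U ∪ N)ᶜ ⊆ {ω | ∑ i, (phat ω i - pstar i) ^ 2 ≤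
      4 * Real.sqrt 2 * rho Dd * (∑ e, |D.mulVec pstar e|) * Real.log (4 * (n:ℝ) ^ 2 / δ)
      + 4 * (supp0 pstar) * Real.log (4 / δ) / n} := by
    intro ω hω
    simp only [Set.mem_compl_iff, Set.mem_union, not_or] at hω
    obtain ⟨⟨hAω, hUω⟩, hNω⟩ := hω
    have hN' : ∀ i, (pstar i = 0 ∨ pstar i = 1) → Y ω i = pstar i := by
      by_contra hc
      exact hNω hc
    have hAω' : |SA ω| ≤ rA := not_lt.1 hAω
    have hBω' : ∀ j, |SB j ω| ≤ rB := by
      intro j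
      apply not_lt.1
      intro hc
      exact hUω (Set.mem_iUnion.2 ⟨j, hc⟩)
    have hχε : ∀ i, χ i * (Y ω i - pstar i) = Y ω i - pstar i := by
      intro i
      by_cases h : pstar i = 0 ∨ pstar i = 1
      · rw [hN' i h]
        simp [hχdef, h]
      · simp [hχdef, h]
    have hA2 : |∑ i, (Y ω i - pstar i)| ≤ rA := by
      have : ∑ i, (Y ω i - pstar i) = SA ω := by
        rw [hSAdef]
        exact Finset.sum_congr rfl fun i _ => (hχε i).symm
      rw [this]
      exact hAω'
    have hB2 : ∀ j, |∑ i, Dd i j * (Y ω i - pstar i)| ≤ rB := by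
      intro j
      have : ∑ i, Dd i j * (Y ω i - pstar i) = SB j ω := by
        rw [hSBdef]
        apply Finset.sum_congr rfl
        intro i _
        rcases hχ01 i with h | h
        · have h0 : Y ω i - pstar i = 0 := by
            have h1 := hχε i
            rw [h, zero_mul] at h1
            exact h1.symm
          rw [h0]
          ring
        · rw [h]
          ring
      rw [this]
      exact hBω' j
    have hdet := deterministic hD hG hDd hn lam rA rB hlam0 hrA0 hrB0 h2rB
      pstar (Y ω) (phat ω) (hphat ω) hA2 hB2
    simp only [Set.mem_setOf_eq]
    refine hdet.trans ?_
    have hterm2 : 4 * ((n:ℝ) * lam) * (∑ e, |D.mulVec pstar e|)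
        = 4 * Real.sqrt 2 * rho Dd * (∑ e, |D.mulVec pstar e|) * Real.log (4 * (n:ℝ) ^ 2 / δ) := by
      rw [hnlam, ← hρdef, ← hLdef]
      ring
    have hWAs : WA ≤ (supp0 pstar : ℝ) := by
      have h1 : WA ≤ ∑ i, (if pstar i ≠ 0 then (1:ℝ) else 0) := by
        apply Finset.sum_le_sum
        intro i _
        by_cases h : pstar i = 0 ∨ pstar i = 1
        · have hz : χ i = 0 := by
            simp only [hχdef]
            exact if_pos h
          rw [hz]
          split_ifs <;> norm_num
        · have hne : pstar i ≠ 0 := fun hc => h (Or.inl hc)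
          simp [hχdef, h, hne]
          split_ifs <;> norm_num
      have h2 : ∑ i, (if pstar i ≠ 0 then (1:ℝ) else 0)
          = ((Finset.univ.filter (fun i => pstar i ≠ 0)).card : ℝ) := by
        rw [Finset.sum_boole]
      have h3 : supp0 pstar = (Finset.univ.filter (fun i => pstar i ≠ 0)).card := by
        rw [supp0, Nat.card_eq_fintype_card, Fintype.card_subtype]
      rw [h2] at h1
      rw [h3]
      exact h1
    have hterm1 : 4 * rA ^ 2 / (n:ℝ) ≤ 4 * (supp0 pstar : ℝ) * Lδ / (n:ℝ) := by
      apply (div_le_div_iff_of_pos_right hn').2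
      rw [hrAdef, Real.sq_sqrt (by positivity)]
      nlinarith [hWAs, hLδpos.le, hWA0]
    rw [← hLδdef]
    calc 4 * rA ^ 2 / (n:ℝ) + 4 * ((n:ℝ) * lam) * (∑ e, |D.mulVec pstar e|)
        ≤ 4 * (supp0 pstar : ℝ) * Lδ / (n:ℝ) + 4 * ((n:ℝ) * lam) * (∑ e, |D.mulVec pstar e|) := by
          linarith [hterm1]
    _ = 4 * Real.sqrt 2 * rho Dd * (∑ e, |D.mulVec pstar e|) * Real.log (4 * (n:ℝ) ^ 2 / δ)
        + 4 * (supp0 pstar : ℝ) * Lδ / (n:ℝ) := by rw [hterm2]; ring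
  -- measurability of the bad event
  have hmSA : Measurable SA := by
    rw [hSAdef]
    exact Finset.measurable_sum _ fun i _ => ((hmY i).sub_const _).const_mul _
  have hmA : MeasurableSet A := by
    rw [hAdef]
    exact measurableSet_lt measurable_const hmSA.abs
  have hmU : MeasurableSet U := by
    rw [hUdef]
    apply MeasurableSet.iUnion
    intro j
    have : Measurable (SB j) := by
      rw [hSBdef]
      exact Finset.measurable_sum _ fun i _ => ((hmY i).sub_const _).const_mul _
    exact measurableSet_lt measurable_const this.abs
  have hmN : MeasurableSet N := by
    rw [hNdef]
    have : {ω | ¬ ∀ i, (pstar i = 0 ∨ pstar i = 1) → Y ω i = pstar i}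
        = (⋂ i, {ω | (pstar i = 0 ∨ pstar i = 1) → Y ω i = pstar i})ᶜ := by
      ext ω
      simp only [Set.mem_compl_iff, Set.mem_iInter, Set.mem_setOf_eq]
    rw [this]
    apply MeasurableSet.compl
    apply MeasurableSet.iInter
    intro i
    by_cases h : pstar i = 0 ∨ pstar i = 1
    · have : {ω | (pstar i = 0 ∨ pstar i = 1) → Y ω i = pstar i}
          = {ω | Y ω i = pstar i} := by
        ext ω; simp [h]
      rw [this]
      exact (hmY i) (measurableSet_singleton _)
    · have : {ω | (pstar i = 0 ∨ pstar i = 1) → Y ω i = pstar i} = Set.univ := by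
        ext ω; simp [h]
      rw [this]
      exact MeasurableSet.univ
  have hmbad : MeasurableSet (A ∪ U ∪ N) := (hmA.union hmU).union hmN
  -- measure of the bad event
  have hbad : μ (A ∪ U ∪ N) ≤ ENNReal.ofReal δ := by
    calc μ (A ∪ U ∪ N) ≤ μ (A ∪ U) + μ N := measure_union_le _ _
    _ = μ (A ∪ U) := by rw [hμN, add_zero]
    _ ≤ μ A + μ U := measure_union_le _ _
    _ ≤ ENNReal.ofReal (δ / 2) + ENNReal.ofReal (δ / 2) := add_le_add hμA hμU
    _ = ENNReal.ofReal δ := by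
        rw [← ENNReal.ofReal_add (by positivity) (by positivity)]
        norm_num
  -- conclude
  calc ENNReal.ofReal (1 - δ) = 1 - ENNReal.ofReal δ := by
        rw [ENNReal.ofReal_sub 1 hδ0.le, ENNReal.ofReal_one]
  _ ≤ 1 - μ (A ∪ U ∪ N) := tsub_le_tsub_left hbad 1
  _ = μ ((A ∪ U ∪ N)ᶜ) := by
        rw [measure_compl hmbad (measure_ne_top μ _), measure_univ]
  _ ≤ _ := measure_mono hsub

end OneBit
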